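/- The algebra map s : A[y_1,…,y_m]/J → (A[M^{m×n}]/I)^{S_n} induced by y_i ↦ s_i is an isomorphism onto the subalgebra of S_n-invariant (column-symmetric) elements of A[M^{m×n}]/I. -/

import Mathlib

open MvPolynomial
open scoped Classical

namespace Stmt13Aux

noncomputable section

variable {A : Type*} [CommRing A] [Algebra ℚ A] {m n : ℕ}

set_option linter.unusedSectionVars false
set_option maxHeartbeats 1000000
def cD (d : Fin m × Fin n →₀ ℕ) (j : Fin n) : ℕ := ∑ i, d (i, j)

def IsGood (d : Fin m × Fin n →₀ ℕ) : Prop := ∀ j, cD d j ≤ 1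

def degm (α : Fin m →₀ ℕ) : ℕ := ∑ i, α i

lemma cD_add (d e : Fin m × Fin n →₀ ℕ) (j : Fin n) : cD (d + e) j = cD d j + cD e j := by
  simp [cD, Finset.sum_add_distrib]

lemma cD_single (v : Fin m × Fin n) (k : ℕ) (j : Fin n) :
    cD (Finsupp.single v k) j = if v.2 = j then k else 0 := by
  rcases v with ⟨i, j'⟩
  rcases eq_or_ne j' j with rfl | h
  · simp [cD, Finsupp.single_apply]
  · simp [cD, Finsupp.single_apply, Prod.ext_iff, h]

lemma degm_add (α β : Fin m →₀ ℕ) : degm (α + β) = degm α + degm β := by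
  simp [degm, Finset.sum_add_distrib]

lemma degm_single (i : Fin m) (k : ℕ) : degm (Finsupp.single i k) = k := by
  simp [degm, Finsupp.single_apply]

lemma not_isGood_iff {d : Fin m × Fin n →₀ ℕ} :
    ¬ IsGood d ↔ ∃ e ∈ {e : Fin m × Fin n →₀ ℕ |
        ∃ (i i' : Fin m) (j : Fin n),
          e = Finsupp.single (i, j) 1 + Finsupp.single (i', j) 1}, e ≤ d := by
  constructor
  · intro h
    rw [IsGood, not_forall] at h
    obtain ⟨j, hj⟩ := h
    push_neg at hj
    -- 2 ≤ cD d j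
    have h2 : 2 ≤ ∑ i, d (i, j) := hj
    by_cases hone : ∃ i, 2 ≤ d (i, j)
    · obtain ⟨i, hi⟩ := hone
      refine ⟨_, ⟨i, i, j, rfl⟩, ?_⟩
      intro v
      rcases eq_or_ne v (i, j) with rfl | hv
      · simpa [Finsupp.single_apply] using hi
      · simp [Finsupp.single_apply, hv.symm]
    · push_neg at hone
      have hex : ∃ i, 1 ≤ d (i, j) := by
        by_contra hc
        push_neg at hc
        have : ∑ i, d (i, j) = 0 := Finset.sum_eq_zero fun i _ => by
          have := hc i; omega
        omega
      obtain ⟨i, hi⟩ := hex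
      have hex2 : ∃ i', i' ≠ i ∧ 1 ≤ d (i', j) := by
        by_contra hc
        push_neg at hc
        have : ∑ i', d (i', j) ≤ 1 := by
          calc ∑ i', d (i', j) ≤ ∑ i', if i' = i then 1 else 0 := by
                refine Finset.sum_le_sum fun i' _ => ?_
                rcases eq_or_ne i' i with rfl | h'
                · have := hone i'; simp; omega
                · have := hc i' h'; simp [h']; omega
            _ = 1 := by simp
        omega
      obtain ⟨i', hne, hi'⟩ := hex2
      refine ⟨_, ⟨i, i', j, rfl⟩, ?_⟩
      intro v
      simp only [Finsupp.add_apply, Finsupp.single_apply, Prod.mk.injEq]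
      rcases eq_or_ne v (i, j) with rfl | hv
      · simp [hne]; omega
      · rcases eq_or_ne v (i', j) with rfl | hv'
        · simp [Ne.symm hne]; omega
        · rw [if_neg (fun h => hv h.symm), if_neg (fun h => hv' h.symm)]
          simp
  · rintro ⟨e, ⟨i, i', j, rfl⟩, hle⟩
    intro hgood
    have h1 : (1 : ℕ) ≤ d (i, j) + d (i', j) ∨ 2 ≤ d (i, j) := by
      rcases eq_or_ne i i' with rfl | hne
      · right
        have := hle (i, j)
        simpa [Finsupp.single_apply] using this
      · left
        have := hle (i, j)
        have h' : (1:ℕ) ≤ d (i,j) := by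
          have : ((i', j) : Fin m × Fin n) ≠ (i, j) := by simp [Ne.symm hne]
          simpa [Finsupp.single_apply, this] using hle (i,j)
        omega
    have hcd : 2 ≤ cD d j := by
      rcases eq_or_ne i i' with rfl | hne
      · have h2 : 2 ≤ d (i, j) := by
          have := hle (i, j); simpa [Finsupp.single_apply] using this
        calc 2 ≤ d (i, j) := h2
          _ ≤ cD d j := Finset.single_le_sum (f := fun i => d (i,j)) (fun _ _ => Nat.zero_le _) (Finset.mem_univ i)
      · have h1 : 1 ≤ d (i, j) := by
          have : ((i', j) : Fin m × Fin n) ≠ (i, j) := by simp [Ne.symm hne]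
          simpa [Finsupp.single_apply, this] using hle (i,j)
        have h2 : 1 ≤ d (i', j) := by
          have : ((i, j) : Fin m × Fin n) ≠ (i', j) := by simp [hne]
          simpa [Finsupp.single_apply, this] using hle (i',j)
        have : d (i,j) + d (i',j) ≤ cD d j := by
          rw [cD, ← Finset.sum_erase_add _ _ (Finset.mem_univ i)]
          have : d (i', j) ≤ ∑ x ∈ Finset.univ.erase i, d (x, j) :=
            Finset.single_le_sum (f := fun x => d (x,j)) (fun _ _ => Nat.zero_le _)
              (Finset.mem_erase.2 ⟨Ne.symm hne, Finset.mem_univ _⟩)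
          omega
        omega
    have := hgood j
    omega

lemma degm_zero : degm (0 : Fin m →₀ ℕ) = 0 := by simp [degm]

lemma degm_sum {ι : Type*} (s : Finset ι) (g : ι → (Fin m →₀ ℕ)) :
    degm (∑ l ∈ s, g l) = ∑ l ∈ s, degm (g l) := by
  classical
  induction s using Finset.induction_on with
  | empty => simp [degm_zero]
  | insert _ _ h ih => rw [Finset.sum_insert h, Finset.sum_insert h, degm_add, ih]

lemma degm_mono {α β : Fin m →₀ ℕ} (h : α ≤ β) : degm α ≤ degm β :=
  Finset.sum_le_sum fun i _ => h i

lemma mem_I_iff (r : MvPolynomial (Fin m × Fin n) A) :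
    r ∈ Ideal.span {w : MvPolynomial (Fin m × Fin n) A |
      ∃ (i i' : Fin m) (j : Fin n), w = X (i, j) * X (i', j)} ↔
    ∀ d ∈ r.support, ¬ IsGood d := by
  have hset : {w : MvPolynomial (Fin m × Fin n) A |
      ∃ (i i' : Fin m) (j : Fin n), w = X (i, j) * X (i', j)} =
      (fun e => monomial e (1:A)) '' {e | ∃ (i i' : Fin m) (j : Fin n),
        e = Finsupp.single (i,j) 1 + Finsupp.single (i',j) 1} := by
    ext w
    constructor
    · rintro ⟨i,i',j,rfl⟩
      exact ⟨_, ⟨i,i',j,rfl⟩, by rw [X, X, monomial_mul, one_mul]⟩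
    · rintro ⟨e, ⟨i,i',j,rfl⟩, rfl⟩
      exact ⟨i,i',j, by rw [X, X, monomial_mul, one_mul]⟩
  rw [hset, mem_ideal_span_monomial_image]
  exact forall₂_congr fun d _ => not_isGood_iff.symm

lemma prod_X_eq {ι : Type*} (s : Finset ι) (f : ι → Fin m) :
    (∏ l ∈ s, (X (f l) : MvPolynomial (Fin m) A)) =
      monomial (∑ l ∈ s, Finsupp.single (f l) 1) 1 := by
  classical
  induction s using Finset.induction_on with
  | empty => simp
  | insert _ _ h ih =>
    rw [Finset.prod_insert h, Finset.sum_insert h, ih, X, monomial_mul, one_mul]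

lemma exists_le_of_degm (k : ℕ) : ∀ (α : Fin m →₀ ℕ), k ≤ degm α →
    ∃ f : Fin k → Fin m, (∑ l, Finsupp.single (f l) 1) ≤ α := by
  induction k with
  | zero => exact fun α _ => ⟨Fin.elim0, by simp⟩
  | succ k ih =>
    intro α hα
    have hpos : ∃ i, 0 < α i := by
      by_contra hc
      push_neg at hc
      have : degm α = 0 := Finset.sum_eq_zero fun i _ => by have := hc i; omega
      rw [this] at hα; omega
    obtain ⟨i, hi⟩ := hpos
    have hle : Finsupp.single i 1 ≤ α := by
      intro v
      rcases eq_or_ne v i with rfl | hv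
      · simpa [Finsupp.single_apply] using Nat.one_le_iff_ne_zero.mpr hi.ne'
      · simp [Finsupp.single_apply, Ne.symm hv]
    have hsplit : α = (α - Finsupp.single i 1) + Finsupp.single i 1 :=
      (tsub_add_cancel_of_le hle).symm
    have hdeg : k ≤ degm (α - Finsupp.single i 1) := by
      have := degm_add (α - Finsupp.single i 1) (Finsupp.single i 1)
      rw [← hsplit, degm_single] at this
      omega
    obtain ⟨f, hf⟩ := ih _ hdeg
    refine ⟨Fin.cons i f, ?_⟩
    rw [Fin.sum_univ_succ]
    simp only [Fin.cons_zero, Fin.cons_succ]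
    calc Finsupp.single i 1 + ∑ l, Finsupp.single (f l) 1
        ≤ Finsupp.single i 1 + (α - Finsupp.single i 1) := by
          exact add_le_add_right hf _
      _ = α := by rw [add_comm, ← hsplit]

lemma mem_J_iff (p : MvPolynomial (Fin m) A) :
    p ∈ Ideal.span {w : MvPolynomial (Fin m) A |
      ∃ f : Fin (n + 1) → Fin m, w = ∏ l, X (f l)} ↔
    ∀ α ∈ p.support, n + 1 ≤ degm α := by
  have hset : {w : MvPolynomial (Fin m) A | ∃ f : Fin (n + 1) → Fin m, w = ∏ l, X (f l)} =
      (fun e => monomial e (1:A)) '' {β | ∃ f : Fin (n+1) → Fin m,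
        β = ∑ l, Finsupp.single (f l) 1} := by
    ext w
    constructor
    · rintro ⟨f, rfl⟩
      exact ⟨_, ⟨f, rfl⟩, (prod_X_eq _ _).symm⟩
    · rintro ⟨e, ⟨f, rfl⟩, rfl⟩
      exact ⟨f, (prod_X_eq _ _).symm⟩
  rw [hset, mem_ideal_span_monomial_image]
  refine forall₂_congr fun α _ => ⟨?_, ?_⟩
  · rintro ⟨β, ⟨f, rfl⟩, hle⟩
    have : degm (∑ l : Fin (n+1), Finsupp.single (f l) 1) = n + 1 := by
      rw [degm_sum]
      simp [degm_single]
    calc n + 1 = _ := this.symm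
      _ ≤ degm α := degm_mono hle
  · intro h
    obtain ⟨f, hf⟩ := exists_le_of_degm (n+1) α h
    exact ⟨_, ⟨f, rfl⟩, hf⟩

def optR : Option (Fin m) → (Fin m →₀ ℕ)
  | none => 0
  | some i => Finsupp.single i 1

def cnt (c : Fin n → Option (Fin m)) : Fin m →₀ ℕ := ∑ j, optR (c j)

def optM : Fin n → Option (Fin m) → (Fin m × Fin n →₀ ℕ)
  | _, none => 0
  | j, some i => Finsupp.single (i, j) 1

def M (c : Fin n → Option (Fin m)) : Fin m × Fin n →₀ ℕ := ∑ j, optM j (c j)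

lemma optM_apply (j : Fin n) (o : Option (Fin m)) (i : Fin m) (j' : Fin n) :
    optM j o (i, j') = if j = j' ∧ o = some i then 1 else 0 := by
  cases o with
  | none => simp [optM]
  | some i' =>
    simp only [optM, Finsupp.single_apply, Prod.mk.injEq]
    by_cases h1 : j = j' <;> by_cases h2 : i' = i <;>
      simp_all [Option.some_inj]

lemma M_apply (c : Fin n → Option (Fin m)) (i : Fin m) (j : Fin n) :
    M c (i, j) = if c j = some i then 1 else 0 := by
  rw [M, Finsupp.finset_sum_apply]
  rw [Finset.sum_eq_single j]
  · rw [optM_apply]; simp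
  · intro j' _ hj'
    rw [optM_apply]
    simp [hj']
  · simp

lemma cD_M (c : Fin n → Option (Fin m)) (j : Fin n) :
    cD (M c) j = if c j = none then 0 else 1 := by
  rw [cD]
  cases hcj : c j with
  | none =>
    simp only [if_pos rfl]
    refine Finset.sum_eq_zero fun i _ => ?_
    rw [M_apply, hcj]; simp
  | some i0 =>
    simp only [reduceCtorEq, if_neg]
    rw [Finset.sum_eq_single i0]
    · rw [M_apply, hcj]; simp
    · intro i' _ hi'
      rw [M_apply, hcj]
      simp [Ne.symm hi', hi']
    · simp

lemma good_M (c : Fin n → Option (Fin m)) : IsGood (M c) := by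
  intro j
  rw [cD_M]
  split <;> omega

lemma M_inj : Function.Injective (M : (Fin n → Option (Fin m)) → _) := by
  intro c c' h
  funext j
  cases hc : c j with
  | none =>
    cases hc' : c' j with
    | none => rfl
    | some i =>
      have h1 := M_apply c i j
      have h2 := M_apply c' i j
      rw [h] at h1
      rw [h1, hc'] at h2
      simp [hc] at h2
  | some i =>
    have h1 := M_apply c i j
    have h2 := M_apply c' i j
    rw [h, h2] at h1
    rw [hc] at h1
    simp at h1
    rw [h1]

lemma cnt_apply (c : Fin n → Option (Fin m)) (i : Fin m) :
    cnt c i = ∑ j, if c j = some i then 1 else 0 := by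
  rw [cnt, Finsupp.finset_sum_apply]
  refine Finset.sum_congr rfl fun j _ => ?_
  cases hcj : c j with
  | none => simp [optR]
  | some i' =>
    simp [optR, Finsupp.single_apply]

lemma degm_cnt (c : Fin n → Option (Fin m)) :
    degm (cnt c) = ∑ j, if c j = none then 0 else 1 := by
  rw [cnt, degm_sum]
  refine Finset.sum_congr rfl fun j _ => ?_
  cases hcj : c j with
  | none => simp [optR, degm]
  | some i' => simp [optR, degm_single]

lemma degm_cnt_le (c : Fin n → Option (Fin m)) : degm (cnt c) ≤ n := by
  rw [degm_cnt]
  calc (∑ j : Fin n, if c j = none then 0 else 1) ≤ ∑ _j : Fin n, 1 :=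
        Finset.sum_le_sum fun j _ => by split <;> omega
    _ = n := by simp

lemma exists_none_slot (c : Fin n → Option (Fin m)) (h : degm (cnt c) < n) :
    ∃ j, c j = none := by
  by_contra hc
  push_neg at hc
  rw [degm_cnt] at h
  have : (∑ j : Fin n, if c j = none then 0 else 1) = n := by
    rw [Finset.sum_congr rfl fun j _ => if_neg (hc j)]
    simp
  omega

lemma cnt_update (c : Fin n → Option (Fin m)) (j : Fin n) (i : Fin m) (h : c j = none) :
    cnt (Function.update c j (some i)) = cnt c + Finsupp.single i 1 := by
  have key : (fun j' => optR (Function.update c j (some i) j')) =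
      Function.update (fun j' => optR (c j')) j (Finsupp.single i 1) := by
    funext j'
    by_cases hj : j' = j
    · subst hj; simp [Function.update_self, optR]
    · simp [Function.update_of_ne hj]
  rw [cnt, cnt]
  calc ∑ j', optR (Function.update c j (some i) j')
      = ∑ j', Function.update (fun j' => optR (c j')) j (Finsupp.single i 1) j' := by rw [key]
    _ = Finsupp.single i 1 + ∑ j' ∈ Finset.univ.erase j, optR (c j') := by
        rw [Finset.sum_update_of_mem (Finset.mem_univ j)]
        rw [Finset.sum_congr rfl fun x hx => rfl]
        congr 1
        apply Finset.sum_congr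
        · ext x; simp [Finset.mem_sdiff, Finset.mem_erase, and_comm]
        · intros; rfl
    _ = cnt c + Finsupp.single i 1 := by
        rw [add_comm, cnt, ← Finset.add_sum_erase _ _ (Finset.mem_univ j), h]
        simp [optR]

lemma M_update (c : Fin n → Option (Fin m)) (j : Fin n) (i : Fin m) (h : c j = none) :
    M (Function.update c j (some i)) = M c + Finsupp.single (i, j) 1 := by
  have key : (fun j' => optM j' (Function.update c j (some i) j')) =
      Function.update (fun j' => optM j' (c j')) j (Finsupp.single (i, j) 1) := by
    funext j'
    by_cases hj : j' = j
    · subst hj; simp [Function.update_self, optM]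
    · simp [Function.update_of_ne hj]
  rw [M, M]
  calc ∑ j', optM j' (Function.update c j (some i) j')
      = ∑ j', Function.update (fun j' => optM j' (c j')) j (Finsupp.single (i, j) 1) j' := by
        rw [key]
    _ = Finsupp.single (i, j) 1 + ∑ j' ∈ Finset.univ.erase j, optM j' (c j') := by
        rw [Finset.sum_update_of_mem (Finset.mem_univ j)]
        congr 1
        apply Finset.sum_congr
        · ext x; simp [Finset.mem_sdiff, Finset.mem_erase, and_comm]
        · intros; rfl
    _ = M c + Finsupp.single (i, j) 1 := by
        rw [add_comm, M, ← Finset.add_sum_erase _ _ (Finset.mem_univ j), h]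
        simp [optM]

lemma exists_cnt_eq : ∀ (k : ℕ) (α : Fin m →₀ ℕ), degm α = k → k ≤ n →
    ∃ c : Fin n → Option (Fin m), cnt c = α := by
  intro k
  induction k with
  | zero =>
    intro α hα _
    have : α = 0 := by
      ext i
      have h0 : ∀ i ∈ Finset.univ, α i = 0 := by
        rw [degm] at hα
        intro i _
        exact (Finset.sum_eq_zero_iff.1 hα) i (Finset.mem_univ i)
      simpa using h0 i (Finset.mem_univ i)
    refine ⟨fun _ => none, ?_⟩
    rw [this, cnt]
    simp [optR]
  | succ k ih =>
    intro α hα hk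
    have hpos : ∃ i, 0 < α i := by
      by_contra hc
      push_neg at hc
      have : degm α = 0 := Finset.sum_eq_zero fun i _ => by have := hc i; omega
      omega
    obtain ⟨i, hi⟩ := hpos
    have hle : Finsupp.single i 1 ≤ α := by
      intro v
      rcases eq_or_ne v i with rfl | hv
      · simpa [Finsupp.single_apply] using Nat.one_le_iff_ne_zero.mpr hi.ne'
      · simp [Finsupp.single_apply, Ne.symm hv]
    have hsplit : (α - Finsupp.single i 1) + Finsupp.single i 1 = α :=
      tsub_add_cancel_of_le hle
    have hdeg : degm (α - Finsupp.single i 1) = k := by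
      have := degm_add (α - Finsupp.single i 1) (Finsupp.single i 1)
      rw [hsplit, degm_single] at this
      omega
    obtain ⟨c', hc'⟩ := ih _ hdeg (by omega)
    have hslot : ∃ j, c' j = none :=
      exists_none_slot c' (by rw [hc', hdeg]; omega)
    obtain ⟨j, hj⟩ := hslot
    refine ⟨Function.update c' j (some i), ?_⟩
    rw [cnt_update c' j i hj, hc', hsplit]

def fac (α : Fin m →₀ ℕ) : ℕ := ∏ i, Nat.factorial (α i)

lemma fac_zero : fac (0 : Fin m →₀ ℕ) = 1 := by simp [fac]

lemma fac_add_single (α : Fin m →₀ ℕ) (i : Fin m) :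
    fac (α + Finsupp.single i 1) = (α i + 1) * fac α := by
  rw [fac, fac, ← Finset.mul_prod_erase _ _ (Finset.mem_univ i),
    ← Finset.mul_prod_erase _ (fun i' => Nat.factorial (α i')) (Finset.mem_univ i)]
  have h1 : ((α + Finsupp.single i 1 : Fin m →₀ ℕ)) i = α i + 1 := by simp
  have h2 : ∀ i' ∈ Finset.univ.erase i, Nat.factorial ((α + Finsupp.single i 1 : Fin m →₀ ℕ) i') = Nat.factorial (α i') := by
    intro i' hi'
    have : i' ≠ i := (Finset.mem_erase.1 hi').1
    simp [Finsupp.single_apply, Ne.symm this]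
  rw [h1, Finset.prod_congr rfl h2, Nat.factorial_succ]
  ring

lemma bad_mem (d : Fin m × Fin n →₀ ℕ) (a : A) (h : ¬ IsGood d) :
    (monomial d a : MvPolynomial (Fin m × Fin n) A) ∈
      Ideal.span {w : MvPolynomial (Fin m × Fin n) A |
        ∃ (i i' : Fin m) (j : Fin n), w = X (i, j) * X (i', j)} := by
  rw [mem_I_iff]
  intro d' hd'
  have hsub := MvPolynomial.support_monomial (s := d) (a := a)
  rw [hsub] at hd'
  split at hd'
  · simp at hd'
  · simp at hd'
    rwa [hd']

lemma degm_eq_zero {α : Fin m →₀ ℕ} (h : degm α = 0) : α = 0 := by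
  ext i
  have := (Finset.sum_eq_zero_iff.1 h) i (Finset.mem_univ i)
  simpa using this

lemma cnt_card (c : Fin n → Option (Fin m)) (i : Fin m) :
    cnt c i = (Finset.univ.filter (fun j => c j = some i)).card := by
  rw [cnt_apply, Finset.card_filter]

lemma key : ∀ (k : ℕ) (α : Fin m →₀ ℕ), degm α = k →
    (aeval (fun i : Fin m => ∑ j, (X (i, j) : MvPolynomial (Fin m × Fin n) A)))
        (monomial α (1:A))
      - ∑ c ∈ Finset.univ.filter (fun c : Fin n → Option (Fin m) => cnt c = α),
          monomial (M c) ((fac α : A))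
    ∈ Ideal.span {w : MvPolynomial (Fin m × Fin n) A |
        ∃ (i i' : Fin m) (j : Fin n), w = X (i, j) * X (i', j)} := by
  intro k
  induction k with
  | zero =>
    intro α hα
    have h0 : α = 0 := degm_eq_zero hα
    subst h0
    have hfilter : Finset.univ.filter (fun c : Fin n → Option (Fin m) => cnt c = 0) =
        {fun _ => none} := by
      ext c
      simp only [Finset.mem_filter, Finset.mem_univ, true_and, Finset.mem_singleton]
      constructor
      · intro hc
        funext j
        have hd : degm (cnt c) = 0 := by rw [hc]; simp [degm]
        rw [degm_cnt] at hd
        have := (Finset.sum_eq_zero_iff.1 hd) j (Finset.mem_univ j)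
        by_contra hne
        rw [if_neg hne] at this
        omega
      · rintro rfl
        simp [cnt, optR]
    rw [hfilter]
    have hM0 : M (fun _ => none : Fin n → Option (Fin m)) = 0 := by simp [M, optM]
    rw [Finset.sum_singleton, hM0, fac_zero]
    simp
  | succ k ih =>
    intro α hα
    have hpos : ∃ i, 0 < α i := by
      by_contra hc
      push_neg at hc
      have : degm α = 0 := Finset.sum_eq_zero fun i _ => by have := hc i; omega
      omega
    obtain ⟨i, hi⟩ := hpos
    have hle : Finsupp.single i 1 ≤ α := by
      intro v
      rcases eq_or_ne v i with rfl | hv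
      · simpa [Finsupp.single_apply] using Nat.one_le_iff_ne_zero.mpr hi.ne'
      · simp [Finsupp.single_apply, Ne.symm hv]
    set α' := α - Finsupp.single i 1 with hα'
    have hsplit : α' + Finsupp.single i 1 = α := tsub_add_cancel_of_le hle
    have hdeg : degm α' = k := by
      have := degm_add α' (Finsupp.single i 1)
      rw [hsplit, degm_single] at this
      omega
    have IH := ih α' hdeg
    set Isp := Ideal.span {w : MvPolynomial (Fin m × Fin n) A |
        ∃ (i i' : Fin m) (j : Fin n), w = X (i, j) * X (i', j)} with hIsp
    set sfun : Fin m → MvPolynomial (Fin m × Fin n) A := fun i => ∑ j, X (i, j) with hsfun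
    set S' : MvPolynomial (Fin m × Fin n) A :=
      ∑ c ∈ Finset.univ.filter (fun c : Fin n → Option (Fin m) => cnt c = α'),
        monomial (M c) ((fac α' : A)) with hS'
    -- (1) aeval factorization
    have e1 : (aeval sfun) (monomial α (1:A)) = sfun i * (aeval sfun) (monomial α' (1:A)) := by
      have : monomial α (1:A) = X i * monomial α' (1:A) := by
        rw [X, monomial_mul, one_mul, add_comm, hsplit]
      rw [this, map_mul, aeval_X]
    -- (2) expansion
    have e2 : sfun i * S' =
        ∑ c ∈ Finset.univ.filter (fun c : Fin n → Option (Fin m) => cnt c = α'),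
          ∑ j, monomial (M c + Finsupp.single (i, j) 1) ((fac α' : A)) := by
      rw [hS', hsfun, Finset.sum_mul_sum, Finset.sum_comm]
      refine Finset.sum_congr rfl fun c _ => Finset.sum_congr rfl fun j _ => ?_
      rw [X, monomial_mul, one_mul, add_comm]
    -- T2
    set T2 : MvPolynomial (Fin m × Fin n) A :=
      ∑ c ∈ Finset.univ.filter (fun c : Fin n → Option (Fin m) => cnt c = α'),
        ∑ j ∈ Finset.univ.filter (fun j => c j = none),
          monomial (M c + Finsupp.single (i, j) 1) ((fac α' : A)) with hT2
    -- (3) bad part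
    have h3 : (∑ c ∈ Finset.univ.filter (fun c : Fin n → Option (Fin m) => cnt c = α'),
          ∑ j, monomial (M c + Finsupp.single (i, j) 1) ((fac α' : A))) - T2 ∈ Isp := by
      rw [hT2, ← Finset.sum_sub_distrib]
      refine Ideal.sum_mem _ fun c _ => ?_
      have hsplitsum : (∑ j, monomial (M c + Finsupp.single (i, j) 1) ((fac α' : A)))
          = (∑ j ∈ Finset.univ.filter (fun j => c j = none),
              monomial (M c + Finsupp.single (i, j) 1) ((fac α' : A)))
            + ∑ j ∈ Finset.univ.filter (fun j => ¬ c j = none),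
              monomial (M c + Finsupp.single (i, j) 1) ((fac α' : A)) :=
        (Finset.sum_filter_add_sum_filter_not _ _ _).symm
      rw [hsplitsum, add_sub_cancel_left]
      refine Ideal.sum_mem _ fun j hj => ?_
      have hj' : ¬ c j = none := (Finset.mem_filter.1 hj).2
      refine bad_mem _ _ ?_
      intro hgood
      have := hgood j
      rw [cD_add, cD_M, cD_single, if_neg hj'] at this
      simp at this
    -- (4) reindex T2
    have e4 : T2 = ∑ c' ∈ Finset.univ.filter (fun c : Fin n → Option (Fin m) => cnt c = α),
        ∑ j ∈ Finset.univ.filter (fun j => c' j = some i),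
          monomial (M c') ((fac α' : A)) := by
      rw [hT2]
      rw [Finset.sum_sigma', Finset.sum_sigma']
      refine Finset.sum_nbij'
        (fun x => ⟨Function.update x.1 x.2 (some i), x.2⟩)
        (fun y => ⟨Function.update y.1 y.2 none, y.2⟩)
        ?_ ?_ ?_ ?_ ?_
      · rintro ⟨c, j⟩ hx
        rw [Finset.mem_sigma] at hx
        obtain ⟨hc, hj⟩ := hx
        have hcj : c j = none := by simpa using (Finset.mem_filter.1 hj).2
        have hcnt : cnt c = α' := by simpa using (Finset.mem_filter.1 hc).2
        rw [Finset.mem_sigma]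
        constructor
        · simp only [Finset.mem_filter, Finset.mem_univ, true_and]
          rw [cnt_update c j i hcj, hcnt, hsplit]
        · simp [Function.update_self]
      · rintro ⟨c', j⟩ hy
        rw [Finset.mem_sigma] at hy
        obtain ⟨hc', hj⟩ := hy
        have hc'j : c' j = some i := by simpa using (Finset.mem_filter.1 hj).2
        have hcnt : cnt c' = α := by simpa using (Finset.mem_filter.1 hc').2
        rw [Finset.mem_sigma]
        constructor
        · simp only [Finset.mem_filter, Finset.mem_univ, true_and]
          have hupd : Function.update (Function.update c' j none) j (some i) = c' := by
            rw [Function.update_idem, ← hc'j, Function.update_eq_self]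
          have := cnt_update (Function.update c' j none) j i (by simp)
          rw [hupd, hcnt] at this
          have := congrArg (fun β => β - Finsupp.single i 1) this
          simpa [hα'] using this.symm
        · simp [Function.update_self]
      · rintro ⟨c, j⟩ hx
        rw [Finset.mem_sigma] at hx
        have hcj : c j = none := by simpa using (Finset.mem_filter.1 hx.2).2
        simp only [Sigma.mk.inj_iff, heq_eq_eq, and_true]
        rw [Function.update_idem, ← hcj, Function.update_eq_self]
      · rintro ⟨c', j⟩ hy
        rw [Finset.mem_sigma] at hy
        have hc'j : c' j = some i := by simpa using (Finset.mem_filter.1 hy.2).2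
        simp only [Sigma.mk.inj_iff, heq_eq_eq, and_true]
        rw [Function.update_idem, ← hc'j, Function.update_eq_self]
      · rintro ⟨c, j⟩ hx
        rw [Finset.mem_sigma] at hx
        have hcj : c j = none := by simpa using (Finset.mem_filter.1 hx.2).2
        rw [M_update c j i hcj]
    -- (5) count
    have e5 : (∑ c' ∈ Finset.univ.filter (fun c : Fin n → Option (Fin m) => cnt c = α),
        ∑ j ∈ Finset.univ.filter (fun j => c' j = some i),
          monomial (M c') ((fac α' : A)))
        = ∑ c' ∈ Finset.univ.filter (fun c : Fin n → Option (Fin m) => cnt c = α),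
            monomial (M c') ((fac α : A)) := by
      refine Finset.sum_congr rfl fun c' hc' => ?_
      have hcnt : cnt c' = α := by simpa using (Finset.mem_filter.1 hc').2
      rw [Finset.sum_const]
      have hcard : (Finset.univ.filter (fun j => c' j = some i)).card = α i := by
        rw [← cnt_card, hcnt]
      rw [hcard]
      have hai : α i = α' i + 1 := by
        have := congrArg (fun β => β i) hsplit
        simpa [Finsupp.single_apply] using this.symm
      have hfac : fac α = (α' i + 1) * fac α' := by
        rw [← hsplit, fac_add_single]
      rw [smul_monomial, hfac, hai]
      congr 1
      push_cast
      ring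
    -- assemble
    have final : (aeval sfun) (monomial α (1:A))
        - ∑ c ∈ Finset.univ.filter (fun c : Fin n → Option (Fin m) => cnt c = α),
            monomial (M c) ((fac α : A))
        = sfun i * ((aeval sfun) (monomial α' (1:A)) - S')
          + ((∑ c ∈ Finset.univ.filter (fun c : Fin n → Option (Fin m) => cnt c = α'),
              ∑ j, monomial (M c + Finsupp.single (i, j) 1) ((fac α' : A))) - T2) := by
      rw [mul_sub, ← e1, ← e2, e4, e5]
      ring
    rw [final]
    exact add_mem (Ideal.mul_mem_left _ _ IH) h3

lemma prodMap_eq_equiv (σ : Equiv.Perm (Fin n)) :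
    (Prod.map id ⇑σ : Fin m × Fin n → Fin m × Fin n) =
      ⇑(Equiv.prodCongr (Equiv.refl (Fin m)) σ) := rfl

lemma prodMap_injective (σ : Equiv.Perm (Fin n)) :
    Function.Injective (Prod.map id ⇑σ : Fin m × Fin n → Fin m × Fin n) := by
  rw [prodMap_eq_equiv]
  exact (Equiv.prodCongr (Equiv.refl (Fin m)) σ).injective

lemma mapDomain_apply' (σ : Equiv.Perm (Fin n)) (d : Fin m × Fin n →₀ ℕ) (i : Fin m) (j : Fin n) :
    Finsupp.mapDomain (Prod.map id ⇑σ) d (i, j) = d (i, σ⁻¹ j) := by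
  rw [prodMap_eq_equiv, Finsupp.mapDomain_equiv_apply]
  rfl

lemma cD_mapDomain (σ : Equiv.Perm (Fin n)) (d : Fin m × Fin n →₀ ℕ) (j : Fin n) :
    cD (Finsupp.mapDomain (Prod.map id ⇑σ) d) j = cD d (σ⁻¹ j) := by
  rw [cD, cD]
  exact Finset.sum_congr rfl fun i _ => mapDomain_apply' σ d i j

lemma isGood_mapDomain {σ : Equiv.Perm (Fin n)} {d : Fin m × Fin n →₀ ℕ} (h : IsGood d) :
    IsGood (Finsupp.mapDomain (Prod.map id ⇑σ) d) := by
  intro j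
  rw [cD_mapDomain]
  exact h _

lemma not_isGood_mapDomain {σ : Equiv.Perm (Fin n)} {d : Fin m × Fin n →₀ ℕ} (h : ¬ IsGood d) :
    ¬ IsGood (Finsupp.mapDomain (Prod.map id ⇑σ) d) := by
  intro hg
  apply h
  intro j
  have := hg (σ j)
  rw [cD_mapDomain] at this
  simpa using this

lemma support_rename_sub (σ : Equiv.Perm (Fin n)) (r : MvPolynomial (Fin m × Fin n) A) :
    ∀ d' ∈ (rename (Prod.map id ⇑σ) r).support,
      ∃ d ∈ r.support, d' = Finsupp.mapDomain (Prod.map id ⇑σ) d := by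
  intro d' hd'
  rw [mem_support_iff] at hd'
  have hexp : rename (Prod.map id ⇑σ) r =
      ∑ d ∈ r.support, monomial (Finsupp.mapDomain (Prod.map id ⇑σ) d) (coeff d r) := by
    conv_lhs => rw [r.as_sum]
    rw [map_sum]
    exact Finset.sum_congr rfl fun d _ => rename_monomial _ _ _
  rw [hexp, coeff_sum] at hd'
  obtain ⟨d, hd, hne⟩ := Finset.exists_ne_zero_of_sum_ne_zero hd'
  rw [coeff_monomial] at hne
  refine ⟨d, hd, ?_⟩
  by_contra hc
  rw [if_neg (fun h => hc h.symm)] at hne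
  exact hne rfl

lemma rename_mem_I (σ : Equiv.Perm (Fin n)) {r : MvPolynomial (Fin m × Fin n) A}
    (h : r ∈ Ideal.span {w : MvPolynomial (Fin m × Fin n) A |
        ∃ (i i' : Fin m) (j : Fin n), w = X (i, j) * X (i', j)}) :
    rename (Prod.map id ⇑σ) r ∈ Ideal.span {w : MvPolynomial (Fin m × Fin n) A |
        ∃ (i i' : Fin m) (j : Fin n), w = X (i, j) * X (i', j)} := by
  rw [mem_I_iff] at h ⊢
  intro d' hd'
  obtain ⟨d, hd, rfl⟩ := support_rename_sub σ r d' hd'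
  exact not_isGood_mapDomain (h d hd)

lemma good_unique {r : MvPolynomial (Fin m × Fin n) A}
    (h : r ∈ Ideal.span {w : MvPolynomial (Fin m × Fin n) A |
        ∃ (i i' : Fin m) (j : Fin n), w = X (i, j) * X (i', j)})
    (hg : ∀ d ∈ r.support, IsGood d) : r = 0 := by
  rw [mem_I_iff] at h
  have : r.support = ∅ := by
    by_contra hc
    obtain ⟨d, hd⟩ := Finset.nonempty_of_ne_empty hc
    exact h d hd (hg d hd)
  exact support_eq_empty.1 this

lemma comp_perm_eq {ι β : Type*} [Fintype ι] [DecidableEq ι] [Fintype β] [DecidableEq β]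
    (f g : ι → β)
    (h : ∀ b, (Finset.univ.filter (fun x => f x = b)).card =
        (Finset.univ.filter (fun x => g x = b)).card) :
    ∃ σ : Equiv.Perm ι, f ∘ ⇑σ = g := by
  have e : ∀ b, {x // g x = b} ≃ {x // f x = b} := fun b => by
    apply Fintype.equivOfCardEq
    rw [Fintype.card_subtype, Fintype.card_subtype, h]
  refine ⟨Equiv.ofFiberEquiv e, ?_⟩
  funext x
  exact Equiv.ofFiberEquiv_map e x

lemma exists_perm_of_cnt_eq (c c' : Fin n → Option (Fin m)) (h : cnt c = cnt c') :
    ∃ σ : Equiv.Perm (Fin n), c ∘ ⇑σ = c' := by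
  apply comp_perm_eq
  intro b
  cases b with
  | some i =>
    rw [← cnt_card, ← cnt_card, h]
  | none =>
    have htot : ∀ c₀ : Fin n → Option (Fin m),
        (Finset.univ : Finset (Fin n)).card =
          ∑ o : Option (Fin m), (Finset.univ.filter (fun j => c₀ j = o)).card := fun c₀ =>
      Finset.card_eq_sum_card_fiberwise fun x _ => Finset.mem_univ _
    have h1 := htot c
    have h2 := htot c'
    rw [univ_option, Finset.sum_insertNone] at h1 h2
    have hsome : ∀ i : Fin m, (Finset.univ.filter (fun j => c j = some i)).card =
        (Finset.univ.filter (fun j => c' j = some i)).card := fun i => by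
      rw [← cnt_card, ← cnt_card, h]
    rw [Finset.sum_congr rfl (fun i _ => hsome i)] at h1
    omega

lemma mapDomain_M (σ : Equiv.Perm (Fin n)) (c : Fin n → Option (Fin m)) :
    Finsupp.mapDomain (Prod.map id ⇑σ) (M c) = M (c ∘ ⇑σ⁻¹) := by
  ext v
  rcases v with ⟨i, j⟩
  rw [mapDomain_apply', M_apply, M_apply]
  rfl

lemma M_surj {d : Fin m × Fin n →₀ ℕ} (h : IsGood d) :
    ∃ c : Fin n → Option (Fin m), M c = d := by
  refine ⟨fun j => if hj : ∃ i, 0 < d (i, j) then some hj.choose else none, ?_⟩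
  ext v
  rcases v with ⟨i, j⟩
  rw [M_apply]
  by_cases hj : ∃ i, 0 < d (i, j)
  · rw [dif_pos hj]
    have hch : 0 < d (hj.choose, j) := hj.choose_spec
    have hcd : cD d j ≤ 1 := h j
    by_cases hi : hj.choose = i
    · subst hi
      rw [if_pos rfl]
      have hle : d (hj.choose, j) ≤ cD d j :=
        Finset.single_le_sum (f := fun i => d (i, j)) (fun _ _ => Nat.zero_le _)
          (Finset.mem_univ _)
      omega
    · rw [if_neg (by simpa using hi)]
      by_contra hne
      have h1 : 0 < d (i, j) := Nat.pos_of_ne_zero (fun h0 => hne h0.symm)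
      have : d (hj.choose, j) + d (i, j) ≤ cD d j := by
        rw [cD, ← Finset.add_sum_erase _ _ (Finset.mem_univ hj.choose)]
        have : d (i, j) ≤ ∑ x ∈ Finset.univ.erase hj.choose, d (x, j) :=
          Finset.single_le_sum (f := fun x => d (x, j)) (fun _ _ => Nat.zero_le _)
            (Finset.mem_erase.2 ⟨fun h' => hi h'.symm, Finset.mem_univ _⟩)
        omega
      omega
  · rw [dif_neg hj]
    push_neg at hj
    have := hj i
    simp only [reduceCtorEq, if_false]
    omega

lemma sum_M_eq {r : MvPolynomial (Fin m × Fin n) A} (hg : ∀ d ∈ r.support, IsGood d) :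
    ∑ c : Fin n → Option (Fin m), monomial (M c) (coeff (M c) r) = r := by
  have hsplit : (Finset.univ : Finset (Fin n → Option (Fin m))) =
      Finset.univ.filter (fun c => M c ∈ r.support) ∪
      Finset.univ.filter (fun c => M c ∉ r.support) := by
    rw [Finset.filter_union_filter_not_eq]
  rw [← Finset.sum_filter_add_sum_filter_not Finset.univ (fun c => M c ∈ r.support)]
  have h2 : ∑ c ∈ Finset.univ.filter (fun c => M c ∉ r.support),
      monomial (M c) (coeff (M c) r) = 0 := by
    refine Finset.sum_eq_zero fun c hc => ?_
    have : coeff (M c) r = 0 := by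
      have := (Finset.mem_filter.1 hc).2
      rwa [mem_support_iff, not_not] at this
    rw [this, monomial_zero]
  rw [h2, add_zero]
  conv_rhs => rw [r.as_sum]
  refine Finset.sum_bij (fun c _ => M c) ?_ ?_ ?_ ?_
  · intro c hc
    exact (Finset.mem_filter.1 hc).2
  · intro c₁ h₁ c₂ h₂ hM
    have : Function.Injective (M : (Fin n → Option (Fin m)) → _) := by
      intro a b hab
      funext j
      cases ha : a j with
      | none =>
        cases hb : b j with
        | none => rfl
        | some i =>
          have h1 := M_apply a i j
          have h2 := M_apply b i j
          rw [hab] at h1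
          rw [h1, hb] at h2
          simp [ha] at h2
      | some i =>
        have h1 := M_apply a i j
        have h2 := M_apply b i j
        rw [hab, h2] at h1
        rw [ha] at h1
        simp at h1
        rw [h1]
    exact this hM
  · intro d hd
    obtain ⟨c, hc⟩ := M_surj (hg d hd)
    exact ⟨c, Finset.mem_filter.2 ⟨Finset.mem_univ _, by rw [hc]; exact hd⟩, hc⟩
  · intro c _
    rfl

lemma monomial_C_mul {τ : Type*} (e : τ →₀ ℕ) (a : A) :
    (monomial e a : MvPolynomial τ A) = C a * monomial e 1 := by
  rw [C_mul_monomial, mul_one]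

lemma aeval_monomial_C (g : Fin m → MvPolynomial (Fin m × Fin n) A) (e : Fin m →₀ ℕ) (a : A) :
    (aeval g) (monomial e a) = C a * (aeval g) (monomial e (1:A)) := by
  rw [monomial_C_mul, map_mul, aeval_C, algebraMap_eq]

lemma rename_aeval (σ : Equiv.Perm (Fin n)) (p : MvPolynomial (Fin m) A) :
    rename (Prod.map id ⇑σ)
        ((aeval (fun i : Fin m => ∑ j, (X (i, j) : MvPolynomial (Fin m × Fin n) A))) p)
      = (aeval (fun i : Fin m => ∑ j, X (i, j))) p := by
  have hcomp : (rename (Prod.map id ⇑σ)).comp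
      (aeval (fun i : Fin m => ∑ j, (X (i, j) : MvPolynomial (Fin m × Fin n) A)))
      = aeval (fun i : Fin m => ∑ j, X (i, j)) := by
    apply MvPolynomial.algHom_ext
    intro i
    rw [AlgHom.comp_apply, aeval_X]
    rw [map_sum]
    simp only [rename_X]
    exact Fintype.sum_equiv σ _ _ (fun j => rfl)
  exact DFunLike.congr_fun hcomp p

lemma part1 (p : MvPolynomial (Fin m) A)
    (hp : p ∈ Ideal.span {w : MvPolynomial (Fin m) A |
        ∃ f : Fin (n + 1) → Fin m, w = ∏ l, X (f l)}) :
    (aeval (fun i : Fin m => ∑ j, (X (i, j) : MvPolynomial (Fin m × Fin n) A))) p ∈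
      Ideal.span {w : MvPolynomial (Fin m × Fin n) A |
        ∃ (i i' : Fin m) (j : Fin n), w = X (i, j) * X (i', j)} := by
  set sfun : Fin m → MvPolynomial (Fin m × Fin n) A := fun i => ∑ j, X (i, j) with hsfun
  have hgen : ∀ w ∈ {w : MvPolynomial (Fin m) A | ∃ f : Fin (n + 1) → Fin m, w = ∏ l, X (f l)},
      (aeval sfun) w ∈ Ideal.span {w : MvPolynomial (Fin m × Fin n) A |
        ∃ (i i' : Fin m) (j : Fin n), w = X (i, j) * X (i', j)} := by
    rintro w ⟨f, rfl⟩
    show (aeval sfun) (∏ l, X (f l)) ∈ _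
    rw [prod_X_eq Finset.univ f]
    set β : Fin m →₀ ℕ := ∑ l : Fin (n+1), Finsupp.single (f l) 1 with hβ
    have hdegβ : degm β = n + 1 := by
      rw [hβ, degm_sum]
      simp [degm_single]
    have hempty : Finset.univ.filter (fun c : Fin n → Option (Fin m) => cnt c = β) = ∅ := by
      rw [Finset.filter_eq_empty_iff]
      intro c _ hc
      have h1 := degm_cnt_le c
      rw [hc, hdegβ] at h1
      omega
    have hkey := key (A := A) (m := m) (n := n) (degm β) β rfl
    rwa [hempty, Finset.sum_empty, sub_zero] at hkey
  have hle : Ideal.span {w : MvPolynomial (Fin m) A |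
        ∃ f : Fin (n + 1) → Fin m, w = ∏ l, X (f l)}
      ≤ Ideal.comap (aeval sfun).toRingHom
        (Ideal.span {w : MvPolynomial (Fin m × Fin n) A |
          ∃ (i i' : Fin m) (j : Fin n), w = X (i, j) * X (i', j)}) :=
    Ideal.span_le.2 fun w hw => Ideal.mem_comap.2 (hgen w hw)
  exact Ideal.mem_comap.1 (hle hp)

lemma part3 (p q : MvPolynomial (Fin m) A)
    (h : Ideal.Quotient.mk
        (Ideal.span {w : MvPolynomial (Fin m × Fin n) A |
          ∃ (i i' : Fin m) (j : Fin n), w = X (i, j) * X (i', j)})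
        ((aeval (fun i : Fin m => ∑ j, X (i, j))) p) =
      Ideal.Quotient.mk _ ((aeval (fun i : Fin m => ∑ j, X (i, j))) q)) :
    Ideal.Quotient.mk
        (Ideal.span {w : MvPolynomial (Fin m) A |
          ∃ f : Fin (n + 1) → Fin m, w = ∏ l, X (f l)}) p =
      Ideal.Quotient.mk _ q := by
  set sfun : Fin m → MvPolynomial (Fin m × Fin n) A := fun i => ∑ j, X (i, j) with hsfun
  rw [Ideal.Quotient.eq] at h ⊢
  have hr : (aeval sfun) (p - q) ∈
      Ideal.span {w : MvPolynomial (Fin m × Fin n) A |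
        ∃ (i i' : Fin m) (j : Fin n), w = X (i, j) * X (i', j)} := by
    rw [map_sub]; exact h
  set r : MvPolynomial (Fin m) A := p - q with hrdef
  rw [mem_J_iff]
  intro α₀ hα₀
  by_contra hdeg
  push_neg at hdeg
  set G : MvPolynomial (Fin m × Fin n) A :=
    ∑ α ∈ r.support, ∑ c ∈ Finset.univ.filter (fun c : Fin n → Option (Fin m) => cnt c = α),
      monomial (M c) (coeff α r * (fac α : A)) with hG
  have hdiff : (aeval sfun) r - G ∈
      Ideal.span {w : MvPolynomial (Fin m × Fin n) A |
        ∃ (i i' : Fin m) (j : Fin n), w = X (i, j) * X (i', j)} := by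
    have hexp : (aeval sfun) r =
        ∑ α ∈ r.support, C (coeff α r) * (aeval sfun) (monomial α (1:A)) := by
      conv_lhs => rw [r.as_sum]
      rw [map_sum]
      exact Finset.sum_congr rfl fun α _ => aeval_monomial_C sfun α (coeff α r)
    rw [hexp, hG, ← Finset.sum_sub_distrib]
    refine Ideal.sum_mem _ fun α _ => ?_
    have hkey := key (A := A) (m := m) (n := n) (degm α) α rfl
    have heq : C (coeff α r) * ((aeval sfun) (monomial α (1:A))
        - ∑ c ∈ Finset.univ.filter (fun c : Fin n → Option (Fin m) => cnt c = α),
            monomial (M c) ((fac α : A)))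
        = C (coeff α r) * (aeval sfun) (monomial α (1:A))
          - ∑ c ∈ Finset.univ.filter (fun c : Fin n → Option (Fin m) => cnt c = α),
              monomial (M c) (coeff α r * (fac α : A)) := by
      rw [mul_sub, Finset.mul_sum]
      congr 1
      exact Finset.sum_congr rfl fun c _ => by rw [C_mul_monomial]
    rw [← heq]
    exact Ideal.mul_mem_left _ _ hkey
  have hGI : G ∈ Ideal.span {w : MvPolynomial (Fin m × Fin n) A |
      ∃ (i i' : Fin m) (j : Fin n), w = X (i, j) * X (i', j)} := by
    have hGeq : G = (aeval sfun) r - ((aeval sfun) r - G) := by ring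
    rw [hGeq]
    exact sub_mem hr hdiff
  have hGsupp : ∀ d ∈ G.support, IsGood d := by
    intro d hd
    rw [mem_support_iff, hG, coeff_sum] at hd
    obtain ⟨α, _, hne⟩ := Finset.exists_ne_zero_of_sum_ne_zero hd
    rw [coeff_sum] at hne
    obtain ⟨c, _, hne2⟩ := Finset.exists_ne_zero_of_sum_ne_zero hne
    rw [coeff_monomial] at hne2
    by_cases hMc : M c = d
    · rw [← hMc]; exact good_M c
    · rw [if_neg hMc] at hne2; exact absurd rfl hne2
  have hG0 : G = 0 := good_unique hGI hGsupp
  obtain ⟨c₀, hc₀⟩ := exists_cnt_eq (m := m) (n := n) (degm α₀) α₀ rfl (by omega)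
  have hcoeff : coeff (M c₀) G = coeff α₀ r * (fac α₀ : A) := by
    rw [hG, coeff_sum]
    rw [Finset.sum_eq_single α₀]
    · rw [coeff_sum, Finset.sum_eq_single c₀]
      · rw [coeff_monomial, if_pos rfl]
      · intro c _ hne
        rw [coeff_monomial, if_neg]
        intro hM
        exact hne (M_inj hM)
      · intro habs
        exact absurd (Finset.mem_filter.2 ⟨Finset.mem_univ c₀, hc₀⟩) habs
    · intro α hα hne
      rw [coeff_sum]
      refine Finset.sum_eq_zero fun c hc => ?_
      rw [coeff_monomial, if_neg]
      intro hM
      have hcc : c = c₀ := M_inj hM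
      have hcnt : cnt c = α := (Finset.mem_filter.1 hc).2
      rw [hcc, hc₀] at hcnt
      exact hne hcnt.symm
    · intro habs; exact absurd hα₀ habs
  have h0 : coeff α₀ r * (fac α₀ : A) = 0 := by
    rw [← hcoeff, hG0, coeff_zero]
  have hfpos : 0 < fac α₀ := Finset.prod_pos fun i _ => Nat.factorial_pos _
  have hfa : ((fac α₀ : ℚ)) ≠ 0 := by exact_mod_cast hfpos.ne'
  have hzero : coeff α₀ r = 0 := by
    have hcast : ((fac α₀ : ℕ) : A) = algebraMap ℚ A ((fac α₀ : ℚ)) := by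
      rw [← map_natCast (algebraMap ℚ A) (fac α₀)]
    have h1 : coeff α₀ r * (fac α₀ : A) * algebraMap ℚ A ((fac α₀ : ℚ)⁻¹) = coeff α₀ r := by
      rw [mul_assoc, hcast, ← map_mul, mul_inv_cancel₀ hfa, map_one, mul_one]
    rw [← h1, h0, zero_mul]
  exact (mem_support_iff.1 hα₀) hzero

lemma part4 (q : MvPolynomial (Fin m × Fin n) A)
    (hq : ∀ σ : Equiv.Perm (Fin n),
      Ideal.Quotient.mk
          (Ideal.span {w : MvPolynomial (Fin m × Fin n) A |
            ∃ (i i' : Fin m) (j : Fin n), w = X (i, j) * X (i', j)})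
          (rename (Prod.map id σ) q) =
        Ideal.Quotient.mk _ q) :
    ∃ p : MvPolynomial (Fin m) A,
      Ideal.Quotient.mk
          (Ideal.span {w : MvPolynomial (Fin m × Fin n) A |
            ∃ (i i' : Fin m) (j : Fin n), w = X (i, j) * X (i', j)})
          ((aeval (fun i : Fin m => ∑ j, X (i, j))) p) =
        Ideal.Quotient.mk _ q := by
  set sfun : Fin m → MvPolynomial (Fin m × Fin n) A := fun i => ∑ j, X (i, j) with hsfun
  set Isp : Ideal (MvPolynomial (Fin m × Fin n) A) :=
    Ideal.span {w : MvPolynomial (Fin m × Fin n) A |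
      ∃ (i i' : Fin m) (j : Fin n), w = X (i, j) * X (i', j)} with hIsp
  set q' : MvPolynomial (Fin m × Fin n) A :=
    ∑ d ∈ q.support.filter IsGood, monomial d (coeff d q) with hq'def
  have hq'supp : ∀ d ∈ q'.support, IsGood d := by
    intro d hd
    rw [mem_support_iff, hq'def, coeff_sum] at hd
    obtain ⟨d', hd', hne⟩ := Finset.exists_ne_zero_of_sum_ne_zero hd
    rw [coeff_monomial] at hne
    by_cases hdd : d' = d
    · subst hdd; exact (Finset.mem_filter.1 hd').2
    · rw [if_neg hdd] at hne; exact absurd rfl hne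
  have hqq' : q - q' ∈ Isp := by
    have heq : q - q' = ∑ d ∈ q.support.filter (fun d => ¬ IsGood d),
        monomial d (coeff d q) := by
      conv_lhs => rw [q.as_sum, ← Finset.sum_filter_add_sum_filter_not q.support IsGood]
      rw [hq'def]
      ring
    rw [heq]
    exact Ideal.sum_mem _ fun d hd => bad_mem d _ (Finset.mem_filter.1 hd).2
  have hsym : ∀ σ : Equiv.Perm (Fin n), rename (Prod.map id ⇑σ) q' = q' := by
    intro σ
    have h1 : rename (Prod.map id ⇑σ) q' - rename (Prod.map id ⇑σ) q ∈ Isp := by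
      rw [← map_sub]
      refine rename_mem_I σ ?_
      have hn := Isp.neg_mem hqq'
      rwa [neg_sub] at hn
    have h2 : rename (Prod.map id ⇑σ) q - q ∈ Isp := (Ideal.Quotient.eq).1 (hq σ)
    have hmem : rename (Prod.map id ⇑σ) q' - q' ∈ Isp := by
      have heq : rename (Prod.map id ⇑σ) q' - q'
          = (rename (Prod.map id ⇑σ) q' - rename (Prod.map id ⇑σ) q)
            + (rename (Prod.map id ⇑σ) q - q) + (q - q') := by ring
      rw [heq]
      exact add_mem (add_mem h1 h2) hqq'
    have hgood2 : ∀ d ∈ (rename (Prod.map id ⇑σ) q' - q').support, IsGood d := by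
      intro d hd
      rcases Finset.mem_union.1 (MvPolynomial.support_sub _ _ _ hd) with hmem' | hmem'
      · obtain ⟨d₀, hd₀, rfl⟩ := support_rename_sub σ q' d hmem'
        exact isGood_mapDomain (hq'supp d₀ hd₀)
      · exact hq'supp d hmem'
    exact sub_eq_zero.1 (good_unique hmem hgood2)
  have hcoeffsym : ∀ c c' : Fin n → Option (Fin m), cnt c = cnt c' →
      coeff (M c) q' = coeff (M c') q' := by
    intro c c' h
    obtain ⟨τ, hτ⟩ := exists_perm_of_cnt_eq c c' h
    have hMM : Finsupp.mapDomain (Prod.map id ⇑(τ⁻¹ : Equiv.Perm (Fin n))) (M c) = M c' := by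
      rw [mapDomain_M]
      have hcomp : c ∘ ⇑((τ⁻¹ : Equiv.Perm (Fin n))⁻¹) = c' := by rw [inv_inv]; exact hτ
      rw [hcomp]
    rw [← hMM]
    conv_rhs => rw [← hsym τ⁻¹]
    exact (coeff_rename_mapDomain _ (prodMap_injective τ⁻¹) q' (M c)).symm
  set N : (Fin m →₀ ℕ) → ℕ := fun α =>
    (Finset.univ.filter (fun c : Fin n → Option (Fin m) => cnt c = α)).card with hN
  set w : (Fin n → Option (Fin m)) → A := fun c =>
    algebraMap ℚ A (1 / ((fac (cnt c) : ℚ) * (N (cnt c) : ℚ))) * coeff (M c) q' with hw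
  set p : MvPolynomial (Fin m) A := ∑ c : Fin n → Option (Fin m), monomial (cnt c) (w c)
    with hp
  refine ⟨p, ?_⟩
  rw [Ideal.Quotient.eq]
  set B : MvPolynomial (Fin m × Fin n) A :=
    ∑ c : Fin n → Option (Fin m),
      ∑ c' ∈ Finset.univ.filter (fun c' : Fin n → Option (Fin m) => cnt c' = cnt c),
        monomial (M c') (w c * (fac (cnt c) : A)) with hB
  have h1 : (aeval sfun) p - B ∈ Isp := by
    rw [hp, map_sum, hB, ← Finset.sum_sub_distrib]
    refine Ideal.sum_mem _ fun c _ => ?_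
    have hkey := key (A := A) (m := m) (n := n) (degm (cnt c)) (cnt c) rfl
    have heq : (aeval sfun) (monomial (cnt c) (w c))
        - ∑ c' ∈ Finset.univ.filter (fun c' : Fin n → Option (Fin m) => cnt c' = cnt c),
            monomial (M c') (w c * (fac (cnt c) : A))
        = C (w c) * ((aeval sfun) (monomial (cnt c) (1:A))
          - ∑ c' ∈ Finset.univ.filter (fun c' : Fin n → Option (Fin m) => cnt c' = cnt c),
              monomial (M c') ((fac (cnt c) : A))) := by
      rw [mul_sub, Finset.mul_sum, ← aeval_monomial_C sfun (cnt c) (w c)]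
      congr 1
      exact Finset.sum_congr rfl fun c' _ => by rw [C_mul_monomial]
    rw [heq]
    exact Ideal.mul_mem_left _ _ hkey
  have hstep1 : ∀ c : Fin n → Option (Fin m),
      (∑ c' ∈ Finset.univ.filter (fun c' : Fin n → Option (Fin m) => cnt c' = cnt c),
        monomial (M c') (w c * (fac (cnt c) : A)))
      = ∑ c' ∈ Finset.univ.filter (fun c' : Fin n → Option (Fin m) => cnt c' = cnt c),
          monomial (M c') (algebraMap ℚ A (1 / (N (cnt c') : ℚ)) * coeff (M c') q') := by
    intro c
    refine Finset.sum_congr rfl fun c' hc' => ?_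
    have hcc : cnt c' = cnt c := (Finset.mem_filter.1 hc').2
    congr 1
    have hco : coeff (M c) q' = coeff (M c') q' := hcoeffsym c c' hcc.symm
    rw [hw]
    dsimp only
    rw [hco, ← hcc]
    have hcast : ((fac (cnt c') : ℕ) : A) = algebraMap ℚ A ((fac (cnt c') : ℚ)) := by
      rw [← map_natCast (algebraMap ℚ A) (fac (cnt c'))]
    have hNpos : 0 < N (cnt c') :=
      Finset.card_pos.2 ⟨c', Finset.mem_filter.2 ⟨Finset.mem_univ _, rfl⟩⟩
    have hfpos : 0 < fac (cnt c') := Finset.prod_pos fun i _ => Nat.factorial_pos _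
    have hfq : ((fac (cnt c') : ℚ)) ≠ 0 := by exact_mod_cast hfpos.ne'
    have hNq : ((N (cnt c') : ℚ)) ≠ 0 := by exact_mod_cast hNpos.ne'
    rw [hcast]
    calc algebraMap ℚ A (1 / ((fac (cnt c') : ℚ) * (N (cnt c') : ℚ))) * coeff (M c') q'
          * algebraMap ℚ A ((fac (cnt c') : ℚ))
        = (algebraMap ℚ A (1 / ((fac (cnt c') : ℚ) * (N (cnt c') : ℚ)))
            * algebraMap ℚ A ((fac (cnt c') : ℚ))) * coeff (M c') q' := by ring
      _ = algebraMap ℚ A (1 / ((fac (cnt c') : ℚ) * (N (cnt c') : ℚ))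
            * (fac (cnt c') : ℚ)) * coeff (M c') q' := by rw [map_mul]
      _ = algebraMap ℚ A (1 / (N (cnt c') : ℚ)) * coeff (M c') q' := by
          congr 2
          field_simp
  have h2 : B = q' := by
    rw [hB]
    calc (∑ c : Fin n → Option (Fin m),
          ∑ c' ∈ Finset.univ.filter (fun c' : Fin n → Option (Fin m) => cnt c' = cnt c),
            monomial (M c') (w c * (fac (cnt c) : A)))
        = ∑ c : Fin n → Option (Fin m),
            (fun α => ∑ c' ∈ Finset.univ.filter
                (fun c' : Fin n → Option (Fin m) => cnt c' = α),
              monomial (M c') (algebraMap ℚ A (1 / (N (cnt c') : ℚ)) * coeff (M c') q'))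
            (cnt c) :=
          Finset.sum_congr rfl fun c _ => hstep1 c
      _ = ∑ α ∈ Finset.univ.image cnt,
            (Finset.univ.filter (fun c : Fin n → Option (Fin m) => cnt c = α)).card •
            (fun α => ∑ c' ∈ Finset.univ.filter
                (fun c' : Fin n → Option (Fin m) => cnt c' = α),
              monomial (M c') (algebraMap ℚ A (1 / (N (cnt c') : ℚ)) * coeff (M c') q'))
            α := Finset.sum_comp (fun α => ∑ c' ∈ Finset.univ.filter
                (fun c' : Fin n → Option (Fin m) => cnt c' = α),
              monomial (M c') (algebraMap ℚ A (1 / (N (cnt c') : ℚ)) * coeff (M c') q')) cnt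
      _ = ∑ α ∈ Finset.univ.image cnt,
            ∑ c' ∈ Finset.univ.filter (fun c' : Fin n → Option (Fin m) => cnt c' = α),
              monomial (M c') (coeff (M c') q') := by
          refine Finset.sum_congr rfl fun α hα => ?_
          dsimp only
          rw [Finset.smul_sum]
          refine Finset.sum_congr rfl fun c' hc' => ?_
          have hcc : cnt c' = α := (Finset.mem_filter.1 hc').2
          have hNpos : 0 < N α :=
            Finset.card_pos.2 ⟨c', Finset.mem_filter.2 ⟨Finset.mem_univ _, hcc⟩⟩
          have hNq : ((N α : ℚ)) ≠ 0 := by exact_mod_cast hNpos.ne'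
          rw [smul_monomial]
          congr 1
          rw [hcc]
          have hcast : ((N α : ℕ) : A) = algebraMap ℚ A ((N α : ℚ)) := by
            rw [← map_natCast (algebraMap ℚ A) (N α)]
          rw [nsmul_eq_mul]
          show (N α : A) * _ = _
          rw [hcast, ← mul_assoc, ← map_mul]
          rw [show (N α : ℚ) * (1 / (N α : ℚ)) = 1 from by field_simp]
          rw [map_one, one_mul]
      _ = ∑ c' : Fin n → Option (Fin m), monomial (M c') (coeff (M c') q') :=
          Finset.sum_fiberwise_of_maps_to
            (fun c _ => Finset.mem_image_of_mem cnt (Finset.mem_univ c)) _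
      _ = q' := sum_M_eq hq'supp
  have hfin : (aeval sfun) p - q = ((aeval sfun) p - B) + (B - q) := by ring
  rw [hfin]
  refine add_mem h1 ?_
  rw [h2]
  have hn := Isp.neg_mem hqq'
  rwa [neg_sub] at hn

end

end Stmt13Aux

/-- Main theorem: the map `s : A[y_1,…,y_m]/J → A[M^{m×n}]/I`, `y_i ↦ s_i`, is
an isomorphism onto the subalgebra of column-symmetric elements: it is well
defined, takes values in the `S_n`-invariants, is injective, and hits every
invariant element. -/
theorem stmt_13 {A : Type*} [CommRing A] [Algebra ℚ A] (m n : ℕ) :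
    (∀ p ∈ Ideal.span {w : MvPolynomial (Fin m) A |
          ∃ f : Fin (n + 1) → Fin m, w = ∏ l, X (f l)},
        aeval (fun i : Fin m => ∑ j, (X (i, j) : MvPolynomial (Fin m × Fin n) A)) p ∈
          Ideal.span {w : MvPolynomial (Fin m × Fin n) A |
            ∃ (i i' : Fin m) (j : Fin n), w = X (i, j) * X (i', j)}) ∧
    (∀ (p : MvPolynomial (Fin m) A) (σ : Equiv.Perm (Fin n)),
        Ideal.Quotient.mk
            (Ideal.span {w : MvPolynomial (Fin m × Fin n) A |
              ∃ (i i' : Fin m) (j : Fin n), w = X (i, j) * X (i', j)})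
            (rename (Prod.map id σ) (aeval (fun i : Fin m => ∑ j, X (i, j)) p)) =
          Ideal.Quotient.mk _ (aeval (fun i : Fin m => ∑ j, X (i, j)) p)) ∧
    (∀ p q : MvPolynomial (Fin m) A,
        Ideal.Quotient.mk
            (Ideal.span {w : MvPolynomial (Fin m × Fin n) A |
              ∃ (i i' : Fin m) (j : Fin n), w = X (i, j) * X (i', j)})
            (aeval (fun i : Fin m => ∑ j, X (i, j)) p) =
          Ideal.Quotient.mk _ (aeval (fun i : Fin m => ∑ j, X (i, j)) q) →
        Ideal.Quotient.mk
            (Ideal.span {w : MvPolynomial (Fin m) A |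
              ∃ f : Fin (n + 1) → Fin m, w = ∏ l, X (f l)}) p =
          Ideal.Quotient.mk _ q) ∧
    (∀ q : MvPolynomial (Fin m × Fin n) A,
        (∀ σ : Equiv.Perm (Fin n),
          Ideal.Quotient.mk
              (Ideal.span {w : MvPolynomial (Fin m × Fin n) A |
                ∃ (i i' : Fin m) (j : Fin n), w = X (i, j) * X (i', j)})
              (rename (Prod.map id σ) q) =
            Ideal.Quotient.mk _ q) →
        ∃ p : MvPolynomial (Fin m) A,
          Ideal.Quotient.mk
              (Ideal.span {w : MvPolynomial (Fin m × Fin n) A |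
                ∃ (i i' : Fin m) (j : Fin n), w = X (i, j) * X (i', j)})
              (aeval (fun i : Fin m => ∑ j, X (i, j)) p) =
            Ideal.Quotient.mk _ q) := by
  refine ⟨Stmt13Aux.part1, ?_, Stmt13Aux.part3, Stmt13Aux.part4⟩
  intro p σ
  rw [Stmt13Aux.rename_aeval]
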